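/- Let H be a finite group and N an abelian normal subgroup of H such that H/N is cyclic. Let Irr(N) be the group of complex irreducible characters of N (homomorphisms from N to ℂ^×), with H acting on both N and Irr(N) by conjugation. Then there is a bijection between the set of H-orbits on Irr(N) and the set of H-orbits on N that preserves orbit sizes: for every positive integer s, the number of H-orbits of size s on Irr(N) equals the number of H-orbits of size s on N. -/

import Mathlib

open MulAction Finset

private lemma natCard_subtype_eq_filter_card {Z : Type*} [Fintype Z] (p : Z → Prop)
    [DecidablePred p] : Nat.card {z // p z} = (Finset.univ.filter p).card := by
  simp [Nat.card_eq_fintype_card, Fintype.card_subtype]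

private lemma filter_dvd_card_eq_sum {Z : Type*} [Fintype Z] (u : Z → ℕ)
    {s : ℕ} (hs : 0 < s) :
    (Finset.univ.filter (fun z => u z ∣ s)).card
      = ∑ d ∈ s.divisors, (Finset.univ.filter (fun z => u z = d)).card := by
  classical
  rw [Finset.card_eq_sum_card_fiberwise (f := u) (t := s.divisors)
    (fun z hz => Nat.mem_divisors.mpr ⟨(Finset.mem_filter.mp hz).2, hs.ne'⟩)]
  refine Finset.sum_congr rfl fun d hd => ?_
  congr 1
  ext z
  simp only [Finset.filter_filter, Finset.mem_filter, Finset.mem_univ, true_and]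
  exact ⟨fun h => h.2, fun h => ⟨h ▸ (Nat.mem_divisors.mp hd).1, h⟩⟩

private lemma count_eq_of_count_dvd_eq {X Y : Type*} [Fintype X] [Fintype Y]
    (f : X → ℕ) (g : Y → ℕ) (hf : ∀ x, 0 < f x) (hg : ∀ y, 0 < g y)
    (h : ∀ k, (Finset.univ.filter (fun x => f x ∣ k)).card
            = (Finset.univ.filter (fun y => g y ∣ k)).card) (s : ℕ) :
    (Finset.univ.filter (fun x => f x = s)).card
            = (Finset.univ.filter (fun y => g y = s)).card := by
  classical
  induction s using Nat.strong_induction_on with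
  | _ s ih =>
    rcases Nat.eq_zero_or_pos s with rfl | hs
    · rw [Finset.filter_false_of_mem fun x _ => (hf x).ne',
          Finset.filter_false_of_mem fun y _ => (hg y).ne']
      rfl
    · have hx := filter_dvd_card_eq_sum f (s := s) hs
      have hy := filter_dvd_card_eq_sum g (s := s) hs
      have hmem : s ∈ s.divisors := Nat.mem_divisors_self s hs.ne'
      rw [← Finset.sum_erase_add _ _ hmem] at hx hy
      have hsum : ∑ d ∈ s.divisors.erase s, (Finset.univ.filter fun x => f x = d).card
          = ∑ d ∈ s.divisors.erase s, (Finset.univ.filter fun y => g y = d).card := by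
        refine Finset.sum_congr rfl fun d hd => ?_
        have hd' : d ∣ s := (Nat.mem_divisors.mp (Finset.mem_erase.mp hd).2).1
        exact ih d (lt_of_le_of_ne (Nat.le_of_dvd hs hd') (Finset.mem_erase.mp hd).1)
      have hks := h s
      omega

private lemma card_points_orbit_size {G X : Type*} [Group G] [MulAction G X] [Finite X] (s : ℕ) :
    Nat.card {x : X // Nat.card (MulAction.orbit G x) = s}
      = s * Nat.card {ω : Quotient (MulAction.orbitRel G X) //
          Nat.card (MulAction.orbit G ω.out) = s} := by
  classical
  have horb : ∀ x : X, Nat.card (MulAction.orbit G ((Quotient.mk (MulAction.orbitRel G X) x).out))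
      = Nat.card (MulAction.orbit G x) := fun x => by
    rw [MulAction.orbit_eq_iff.mpr (MulAction.orbitRel_apply.mp (Quotient.mk_out x))]
  have e := Equiv.sigmaSubtypeFiberEquivSubtype (fun x : X => Quotient.mk (MulAction.orbitRel G X) x)
      (p := fun x : X => Nat.card (MulAction.orbit G x) = s)
      (q := fun ω : Quotient (MulAction.orbitRel G X) => Nat.card (MulAction.orbit G ω.out) = s)
      (fun x => by rw [horb x])
  rw [← Nat.card_congr e]
  haveI : Fintype X := Fintype.ofFinite X
  haveI : Fintype (Quotient (MulAction.orbitRel G X)) := Fintype.ofFinite _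
  rw [Nat.card_eq_fintype_card, Fintype.card_sigma]
  have hfib : ∀ ω : {ω : Quotient (MulAction.orbitRel G X) //
      Nat.card (MulAction.orbit G ω.out) = s},
      Fintype.card {x : X // Quotient.mk (MulAction.orbitRel G X) x = ω.1} = s := by
    intro ω
    rw [← Nat.card_eq_fintype_card]
    have e2 : {x : X // Quotient.mk (MulAction.orbitRel G X) x = ω.1}
        ≃ {x : X // x ∈ MulAction.orbit G ω.1.out} := by
      refine Equiv.subtypeEquivRight fun x => ?_
      constructor
      · intro hx
        exact MulAction.orbitRel_apply.mp (Quotient.exact (hx.trans (Quotient.out_eq ω.1).symm))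
      · intro hx
        exact (Quotient.sound (MulAction.orbitRel_apply.mpr hx)).trans (Quotient.out_eq ω.1)
    rw [Nat.card_congr e2]
    exact ω.2
  rw [Finset.sum_congr rfl fun ω _ => hfib ω, Finset.sum_const, smul_eq_mul,
    Finset.card_univ, ← Nat.card_eq_fintype_card, mul_comm]

private lemma pow_generator_mem_iff {C : Type*} [Group C] [Finite C]
    (hcomm : ∀ a b : C, a * b = b * a) {c : C}
    (hc : ∀ z : C, z ∈ Subgroup.zpowers c) (S : Subgroup C) (k : ℕ) :
    c ^ k ∈ S ↔ S.index ∣ k := by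
  haveI : S.Normal := ⟨fun n hn g => by
    rw [hcomm g n, mul_assoc, mul_inv_cancel, mul_one]; exact hn⟩
  have hmk : ((c ^ k : C) : C ⧸ S) = ((c : C ⧸ S)) ^ k := by
    exact map_pow (QuotientGroup.mk' S) c k
  have h1 : c ^ k ∈ S ↔ ((c : C ⧸ S)) ^ k = 1 := by
    rw [← hmk, QuotientGroup.eq_one_iff]
  have hgen : ∀ z : C ⧸ S, z ∈ Subgroup.zpowers ((c : C ⧸ S)) := by
    intro z
    obtain ⟨y, rfl⟩ := QuotientGroup.mk'_surjective S z
    obtain ⟨m, rfl⟩ := hc y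
    exact ⟨m, by exact (map_zpow (QuotientGroup.mk' S) c m).symm⟩
  have hord : orderOf ((c : C ⧸ S)) = S.index := by
    rw [orderOf_eq_card_of_forall_mem_zpowers hgen]
    exact (Subgroup.index_eq_card S).symm
  rw [h1, ← orderOf_dvd_iff_pow_eq_one, hord]

private lemma smul_pow_fixed_iff {H : Type*} [Group H] [Finite H] (N : Subgroup H) [N.Normal]
    {X : Type*} [MulAction H X] (htriv : ∀ ν ∈ N, ∀ x : X, ν • x = x)
    {c : H ⧸ N} (hc : ∀ z : H ⧸ N, z ∈ Subgroup.zpowers c) (k : ℕ) (x : X) :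
    c.out ^ k • x = x ↔ Nat.card (MulAction.orbit H x) ∣ k := by
  have hcomm : ∀ a b : H ⧸ N, a * b = b * a := by
    intro a b
    obtain ⟨m, rfl⟩ := hc a
    obtain ⟨n, rfl⟩ := hc b
    rw [← zpow_add, ← zpow_add, add_comm]
  set S := MulAction.stabilizer H x with hS
  have hNS : N ≤ S := fun ν hν => htriv ν hν x
  set Sb := S.map (QuotientGroup.mk' N) with hSb
  have hmap : ∀ h : H, h ∈ S ↔ (QuotientGroup.mk' N h) ∈ Sb := by
    intro h
    constructor
    · exact fun hh => ⟨h, hh, rfl⟩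
    · rintro ⟨g, hg, hgh⟩
      obtain ⟨z, hz, rfl⟩ := (QuotientGroup.mk'_eq_mk' N).mp hgh
      exact S.mul_mem hg (hNS hz)
  have hout : (QuotientGroup.mk' N) (c.out ^ k) = c ^ k := by
    rw [map_pow]
    congr 1
    exact Quotient.out_eq c
  have hidx : Sb.index = S.index :=
    Subgroup.index_map_eq S (QuotientGroup.mk'_surjective N)
      (by rw [QuotientGroup.ker_mk']; exact hNS)
  have hcard : Nat.card (MulAction.orbit H x) = S.index := by
    rw [Nat.card_congr (MulAction.orbitEquivQuotientStabilizer H x)]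
    exact (Subgroup.index_eq_card S).symm
  have hfix : c.out ^ k • x = x ↔ c.out ^ k ∈ S := Iff.rfl
  rw [hfix, hmap, hout, pow_generator_mem_iff hcomm hc Sb k, hidx, hcard]

private lemma card_monoidHom_units_complex (A : Type*) [CommGroup A] [Finite A] :
    Nat.card (A →* ℂˣ) = Nat.card A := by
  haveI : NeZero ((Monoid.exponent A : ℂ)) :=
    ⟨Nat.cast_ne_zero.mpr Monoid.exponent_ne_zero_of_finite⟩
  obtain ⟨e⟩ := CommGroup.monoidHom_mulEquiv_of_hasEnoughRootsOfUnity A ℂ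
  exact Nat.card_congr e.toEquiv

private lemma card_fixed_char {A : Type*} [CommGroup A] [Finite A] (φ : MulAut A) :
    Nat.card {χ : A →* ℂˣ // ∀ a, χ (φ a) = χ a} = Nat.card {a : A // φ a = a} := by
  classical
  set f : A →* A :=
    { toFun := fun a => φ a * a⁻¹
      map_one' := by simp
      map_mul' := fun a b => by
        simp only [map_mul, mul_inv_rev]
        rw [mul_assoc, mul_assoc]
        congr 1
        rw [mul_comm b⁻¹ a⁻¹, ← mul_assoc, mul_comm (φ b)]
        rw [mul_assoc] } with hf
  have hfa : ∀ a, f a = φ a * a⁻¹ := fun a => rfl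
  have h1 : Nat.card {a : A // φ a = a} = Nat.card f.ker := by
    refine Nat.card_congr (Equiv.subtypeEquivRight fun a => ?_)
    rw [MonoidHom.mem_ker, hfa, mul_inv_eq_one, eq_comm]
  have h2 : Nat.card {χ : A →* ℂˣ // ∀ a, χ (φ a) = χ a}
      = Nat.card ((A ⧸ f.range) →* ℂˣ) := by
    refine Nat.card_congr (Equiv.trans
      (Equiv.subtypeEquivRight (q := fun χ : A →* ℂˣ => ∀ a, χ (f a) = 1) fun χ => ?_) ?_)
    · constructor
      · intro h a
        rw [hfa, map_mul, map_inv, h a, mul_inv_cancel]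
      · intro h a
        have := h a
        rw [hfa, map_mul, map_inv, mul_inv_eq_one] at this
        exact this
    · exact
      { toFun := fun χ => QuotientGroup.lift f.range χ.1 (by
          rintro a ⟨b, rfl⟩
          exact χ.2 b)
        invFun := fun ψ => ⟨ψ.comp (QuotientGroup.mk' f.range), fun a => by
          have h0 : ((f a : A) : A ⧸ f.range) = 1 :=
            (QuotientGroup.eq_one_iff _).mpr ⟨a, rfl⟩
          simp [h0]⟩
        left_inv := fun χ => by
          ext a
          rfl
        right_inv := fun ψ => by
          refine MonoidHom.ext fun q => ?_
          refine QuotientGroup.induction_on q fun a => ?_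
          rfl }
  have h3 : Nat.card ((A ⧸ f.range) →* ℂˣ) = Nat.card (A ⧸ f.range) :=
    card_monoidHom_units_complex _
  have h4 : Nat.card (A ⧸ f.range) = Nat.card f.ker := by
    have e1 : Nat.card A = Nat.card (A ⧸ f.range) * Nat.card f.range :=
      Subgroup.card_eq_card_quotient_mul_card_subgroup _
    have e2 : Nat.card A = Nat.card (A ⧸ f.ker) * Nat.card f.ker :=
      Subgroup.card_eq_card_quotient_mul_card_subgroup _
    have e3 : Nat.card (A ⧸ f.ker) = Nat.card f.range :=
      Nat.card_congr (QuotientGroup.quotientKerEquivRange f).toEquiv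
    have hpos : 0 < Nat.card f.range := Nat.card_pos
    have := e1.symm.trans e2
    rw [e3] at this
    exact Nat.eq_of_mul_eq_mul_right hpos (this.trans (mul_comm _ _))
  rw [h2, h3, h4, h1]

private lemma card_fixed_char' {A : Type*} [Group A] (hcomm : ∀ x y : A, x * y = y * x)
    [Finite A] (φ : MulAut A) :
    Nat.card {χ : A →* ℂˣ // ∀ a, χ (φ a) = χ a} = Nat.card {a : A // φ a = a} := by
  letI instC : CommGroup A := { (inferInstance : Group A) with mul_comm := hcomm }
  exact @card_fixed_char A instC _ φ

private lemma finite_char' {A : Type*} [Group A] (hcomm : ∀ x y : A, x * y = y * x)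
    [Finite A] : Finite (A →* ℂˣ) := by
  letI instC : CommGroup A := { (inferInstance : Group A) with mul_comm := hcomm }
  haveI : NeZero ((Monoid.exponent A : ℂ)) :=
    ⟨Nat.cast_ne_zero.mpr Monoid.exponent_ne_zero_of_finite⟩
  obtain ⟨e⟩ := CommGroup.monoidHom_mulEquiv_of_hasEnoughRootsOfUnity A ℂ
  exact Finite.of_equiv _ e.symm.toEquiv

variable {H : Type*} [Group H] (N : Subgroup H) [N.Normal]

/-- Conjugation action of `H` on its normal subgroup `N`. -/
instance conjAction : MulAction H ↥N :=
  MulAction.compHom ↥N (MulAut.conjNormal : H →* MulAut ↥N)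

lemma conjAction_smul_apply (h : H) (x : ↥N) :
    ((h • x : ↥N) : H) = h * x * h⁻¹ := rfl

instance charConjSMul : SMul H (↥N →* ℂˣ) :=
  ⟨fun h χ => χ.comp (MulAut.conjNormal (h⁻¹ : H) : ↥N ≃* ↥N).toMonoidHom⟩

lemma charConjSMul_apply (h : H) (χ : ↥N →* ℂˣ) (x : ↥N) :
    (h • χ) x = χ (MulAut.conjNormal (h⁻¹ : H) x) := rfl

/-- Conjugation action of `H` on the complex irreducible characters
`Irr(N) = Hom(N, ℂ^×)` of its abelian normal subgroup `N`. -/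
instance charConjAction : MulAction H (↥N →* ℂˣ) where
  one_smul χ := by
    ext x
    rw [charConjSMul_apply]
    congr 1
    ext
    simp
  mul_smul g h χ := by
    ext x
    rw [charConjSMul_apply, charConjSMul_apply, charConjSMul_apply]
    congr 1
    ext
    simp [mul_assoc]

/-- **Size-preserving bijection between orbits on `Irr(N)` and on `N`.**
If `N` is an abelian normal subgroup of a finite group `H` with `H/N` cyclic, then for every
`s` the number of `H`-orbits of size `s` on `Irr(N) = Hom(N, ℂ^×)` equals the number of
`H`-orbits of size `s` on `N`. -/
theorem card_orbits_char_eq_card_orbits_of_cyclic_quotient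
    [Finite H] (hN : ∀ x y : ↥N, x * y = y * x) (hcyc : IsCyclic (H ⧸ N)) (s : ℕ) :
    Nat.card {ω : Quotient (MulAction.orbitRel H (↥N →* ℂˣ)) //
        Nat.card (MulAction.orbit H ω.out) = s} =
      Nat.card {ω : Quotient (MulAction.orbitRel H ↥N) //
        Nat.card (MulAction.orbit H ω.out) = s} := by
  classical
  haveI : Finite (↥N →* ℂˣ) := finite_char' hN
  obtain ⟨c, hc⟩ := hcyc
  have htrivN : ∀ ν ∈ N, ∀ x : ↥N, ν • x = x := by
    intro ν hν x
    have h1 : ((ν • x : ↥N) : H) = ν * ↑x * ν⁻¹ := rfl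
    have h2 : (⟨ν, hν⟩ : ↥N) * x = x * ⟨ν, hν⟩ := hN _ _
    have h3 : ν * (x : H) = (x : H) * ν := by
      have := congrArg Subtype.val h2
      simpa using this
    apply Subtype.ext
    rw [h1, h3, mul_assoc, mul_inv_cancel, mul_one]
  have htrivChar : ∀ ν ∈ N, ∀ χ : ↥N →* ℂˣ, ν • χ = χ := by
    intro ν hν χ
    refine MonoidHom.ext fun x => ?_
    rw [charConjSMul_apply]
    congr 1
    apply Subtype.ext
    have h2 : (⟨ν, hν⟩ : ↥N) * x = x * ⟨ν, hν⟩ := hN _ _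
    have h3 : ν * (x : H) = (x : H) * ν := by
      simpa using congrArg Subtype.val h2
    rw [MulAut.conjNormal_apply, inv_inv, mul_assoc, ← h3, ← mul_assoc,
      inv_mul_cancel, one_mul]
  have hconjinv : ∀ (h : H) (a : ↥N),
      MulAut.conjNormal (h⁻¹ : H) (MulAut.conjNormal h a) = a := by
    intro h a
    apply Subtype.ext
    simp [mul_assoc]
  have hconjinv' : ∀ (h : H) (a : ↥N),
      MulAut.conjNormal h (MulAut.conjNormal (h⁻¹ : H) a) = a := by
    intro h a
    apply Subtype.ext
    simp [mul_assoc]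
  have hfixcard : ∀ h : H,
      Nat.card {χ : ↥N →* ℂˣ // h • χ = χ} = Nat.card {x : ↥N // h • x = x} := by
    intro h
    have e1 : Nat.card {χ : ↥N →* ℂˣ // h • χ = χ}
        = Nat.card {χ : ↥N →* ℂˣ // ∀ a, χ (MulAut.conjNormal h a) = χ a} := by
      refine Nat.card_congr (Equiv.subtypeEquivRight fun χ => ?_)
      constructor
      · intro hχ a
        have := DFunLike.congr_fun hχ (MulAut.conjNormal h a)
        rw [charConjSMul_apply, hconjinv h a] at this
        exact this.symm
      · intro hχ
        refine MonoidHom.ext fun x => ?_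
        rw [charConjSMul_apply]
        have := hχ (MulAut.conjNormal (h⁻¹ : H) x)
        rw [hconjinv' h x] at this
        exact this.symm
    have e2 : Nat.card {x : ↥N // h • x = x}
        = Nat.card {a : ↥N // MulAut.conjNormal h a = a} := rfl
    rw [e1, e2]
    exact card_fixed_char' hN (MulAut.conjNormal h)
  haveI : Fintype (↥N →* ℂˣ) := Fintype.ofFinite _
  haveI : Fintype ↥N := Fintype.ofFinite _
  have hposC : ∀ χ : ↥N →* ℂˣ, 0 < Nat.card (MulAction.orbit H χ) := fun χ =>
    Nat.card_pos_iff.mpr ⟨⟨⟨χ, MulAction.mem_orbit_self χ⟩⟩, inferInstance⟩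
  have hposN : ∀ x : ↥N, 0 < Nat.card (MulAction.orbit H x) := fun x =>
    Nat.card_pos_iff.mpr ⟨⟨⟨x, MulAction.mem_orbit_self x⟩⟩, inferInstance⟩
  have hdvd : ∀ k,
      (Finset.univ.filter (fun χ : ↥N →* ℂˣ => Nat.card (MulAction.orbit H χ) ∣ k)).card
      = (Finset.univ.filter (fun x : ↥N => Nat.card (MulAction.orbit H x) ∣ k)).card := by
    intro k
    rw [← natCard_subtype_eq_filter_card, ← natCard_subtype_eq_filter_card]
    rw [Nat.card_congr (Equiv.subtypeEquivRight fun χ : ↥N →* ℂˣ =>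
      (smul_pow_fixed_iff N htrivChar hc k χ).symm)]
    rw [Nat.card_congr (Equiv.subtypeEquivRight fun x : ↥N =>
      (smul_pow_fixed_iff N htrivN hc k x).symm)]
    exact hfixcard (c.out ^ k)
  have hcount := count_eq_of_count_dvd_eq _ _ hposC hposN hdvd s
  rw [← natCard_subtype_eq_filter_card, ← natCard_subtype_eq_filter_card] at hcount
  rw [card_points_orbit_size s, card_points_orbit_size s] at hcount
  rcases Nat.eq_zero_or_pos s with rfl | hs
  · haveI i1 : IsEmpty {ω : Quotient (MulAction.orbitRel H (↥N →* ℂˣ)) //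
        Nat.card (MulAction.orbit H ω.out) = 0} := ⟨fun ω => (hposC _).ne' ω.2⟩
    haveI i2 : IsEmpty {ω : Quotient (MulAction.orbitRel H ↥N) //
        Nat.card (MulAction.orbit H ω.out) = 0} := ⟨fun ω => (hposN _).ne' ω.2⟩
    rw [Nat.card_of_isEmpty, Nat.card_of_isEmpty]
  · exact Nat.eq_of_mul_eq_mul_left hs hcount
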